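/- arXiv:1705.04384 — 2 statements merged into one kernel-verified Lean document; each statement's English description precedes it below -/
import Mathlib

section
/- Let H and A be real symmetric positive definite N × N matrices, let c > 0 be such that vᵀ A v ≥ c · vᵀ H v for every v ∈ ℝ^N, and let A* be any real N × N matrix. Then for every eigenvalue μ in the complex spectrum of A* there exists an eigenvalue λ > 0 of A such that |λ − μ| ≤ (λ / c) · ‖H^{-1/2} (A − A*) H^{-1/2}‖. -/
open scoped Matrix.Norms.L2Operator MatrixOrder
open Matrix

section Helpers

variable {n : Type*} [Fintype n] [DecidableEq n] {𝕜 : Type*} [RCLike 𝕜]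

lemma l2_opNorm_le_of {M : Matrix n n 𝕜} {C : ℝ} (hC : 0 ≤ C)
    (h : ∀ x : n → 𝕜, ‖(WithLp.equiv 2 (n → 𝕜)).symm (M *ᵥ x)‖ ≤
      C * ‖(WithLp.equiv 2 (n → 𝕜)).symm x‖) : ‖M‖ ≤ C := by
  rw [Matrix.l2_opNorm_def]
  refine ContinuousLinearMap.opNorm_le_bound _ hC (fun x => ?_)
  simpa [Matrix.toEuclideanLin_apply] using h ((WithLp.equiv 2 (n → 𝕜)) x)

omit [DecidableEq n] in
lemma sq_norm_euclidean (v : n → 𝕜) :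
    ‖(WithLp.equiv 2 (n → 𝕜)).symm v‖^2 = ∑ i, ‖v i‖^2 := by
  rw [EuclideanSpace.norm_eq, Real.sq_sqrt (by positivity)]
  rfl

lemma norm_map_complex_le (M : Matrix n n ℝ) : ‖M.map (fun x : ℝ => (x:ℂ))‖ ≤ ‖M‖ := by
  apply l2_opNorm_le_of (norm_nonneg M)
  intro x
  set a : n → ℝ := fun i => (x i).re with ha
  set b : n → ℝ := fun i => (x i).im with hb
  have hre : ∀ i, ((M.map (fun x : ℝ => (x:ℂ)) *ᵥ x) i).re = (M *ᵥ a) i := by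
    intro i
    simp [Matrix.mulVec, dotProduct, Complex.re_sum, ha]
  have him : ∀ i, ((M.map (fun x : ℝ => (x:ℂ)) *ᵥ x) i).im = (M *ᵥ b) i := by
    intro i
    simp [Matrix.mulVec, dotProduct, Complex.im_sum, hb]
  refine le_of_pow_le_pow_left₀ two_ne_zero (by positivity) ?_
  rw [mul_pow, sq_norm_euclidean, sq_norm_euclidean]
  have expand : ∀ i, ‖(M.map (fun x : ℝ => (x:ℂ)) *ᵥ x) i‖^2 =
      ((M *ᵥ a) i)^2 + ((M *ᵥ b) i)^2 := by
    intro i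
    rw [← hre i, ← him i, Complex.sq_norm, Complex.normSq_apply]
    ring
  calc ∑ i, ‖(M.map (fun x : ℝ => (x:ℂ)) *ᵥ x) i‖^2
      = (∑ i, ((M *ᵥ a) i)^2) + ∑ i, ((M *ᵥ b) i)^2 := by
        simp_rw [expand]; rw [Finset.sum_add_distrib]
    _ ≤ ‖M‖^2 * (∑ i, ‖a i‖^2) + ‖M‖^2 * (∑ i, ‖b i‖^2) := by
        have h1 : ‖(WithLp.equiv 2 (n → ℝ)).symm (M *ᵥ a)‖ ≤ ‖M‖ * ‖(WithLp.equiv 2 (n → ℝ)).symm a‖ :=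
          M.l2_opNorm_mulVec ((WithLp.equiv 2 (n → ℝ)).symm a)
        have h2 : ‖(WithLp.equiv 2 (n → ℝ)).symm (M *ᵥ b)‖ ≤ ‖M‖ * ‖(WithLp.equiv 2 (n → ℝ)).symm b‖ :=
          M.l2_opNorm_mulVec ((WithLp.equiv 2 (n → ℝ)).symm b)
        have e1 : ∀ (u : n → ℝ), ∑ i, ((M *ᵥ u) i)^2 = ‖(WithLp.equiv 2 (n → ℝ)).symm (M *ᵥ u)‖^2 := by
          intro u; rw [sq_norm_euclidean]
          exact Finset.sum_congr rfl fun i _ => by rw [Real.norm_eq_abs, sq_abs]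
        have e2 : ∀ (u : n → ℝ), (∑ i, ‖u i‖^2) = ‖(WithLp.equiv 2 (n → ℝ)).symm u‖^2 := by
          intro u; rw [sq_norm_euclidean]
        rw [e1, e1, e2, e2]
        have n1 : (0:ℝ) ≤ ‖(WithLp.equiv 2 (n → ℝ)).symm (M *ᵥ a)‖ := norm_nonneg _
        have n2 : (0:ℝ) ≤ ‖(WithLp.equiv 2 (n → ℝ)).symm (M *ᵥ b)‖ := norm_nonneg _
        nlinarith [norm_nonneg ((WithLp.equiv 2 (n → ℝ)).symm a), norm_nonneg ((WithLp.equiv 2 (n → ℝ)).symm b), norm_nonneg M]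
    _ = ‖M‖^2 * ∑ i, ‖x i‖^2 := by
        rw [← mul_add, ← Finset.sum_add_distrib]
        congr 1
        refine Finset.sum_congr rfl fun i _ => ?_
        simp only [Complex.sq_norm, Complex.normSq_apply, ha, hb,
          Real.norm_eq_abs, sq_abs]
        ring

lemma l2_opNorm_diagonal_le {w : n → 𝕜} {r : ℝ} (hr : 0 ≤ r) (h : ∀ i, ‖w i‖ ≤ r) :
    ‖diagonal w‖ ≤ r := by
  apply l2_opNorm_le_of hr
  intro x
  refine le_of_pow_le_pow_left₀ two_ne_zero (by positivity) ?_
  rw [mul_pow, sq_norm_euclidean, sq_norm_euclidean, Finset.mul_sum]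
  refine Finset.sum_le_sum fun i _ => ?_
  rw [mulVec_diagonal, norm_mul, mul_pow]
  have h2 : ‖w i‖^2 ≤ r^2 := by
    have := h i; have := norm_nonneg (w i); nlinarith
  exact mul_le_mul_of_nonneg_right h2 (sq_nonneg _)

lemma l2_opNorm_unitary_le [Nonempty n] (W : Matrix n n 𝕜) (hW : W ∈ Matrix.unitaryGroup n 𝕜) :
    ‖W‖ ≤ 1 := by
  have h1 : star W * W = 1 := hW.1
  have hsq : ‖W‖ * ‖W‖ = 1 := by
    rw [← CStarRing.norm_star_mul_self, h1, Matrix.cstar_norm_def, _root_.map_one, norm_one]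
  nlinarith [norm_nonneg W]

end Helpers

set_option maxHeartbeats 2000000 in
/-- Quantitative inequality from the proof of Proposition 1: if `H` and `A` are symmetric
positive definite with `vᵀAv ≥ c·vᵀHv` for all `v`, then every complex eigenvalue `μ` of an
arbitrary matrix `A*` is within relative distance `(1/c)·‖H^{-1/2}(A - A*)H^{-1/2}‖` of some
(positive) eigenvalue `λ` of `A`. -/
theorem eigenvalue_relative_perturbation_bound
    {N : ℕ} (H A Astar : Matrix (Fin N) (Fin N) ℝ)
    (hH : H.PosDef) (hA : A.PosDef)
    (c : ℝ) (hc : 0 < c)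
    (coer : ∀ v : Fin N → ℝ, c * (v ⬝ᵥ H.mulVec v) ≤ v ⬝ᵥ A.mulVec v) :
    ∀ μ ∈ spectrum ℂ (Astar.map (fun x : ℝ => (x : ℂ))),
      ∃ l ∈ spectrum ℝ A, 0 < l ∧
        ‖(l : ℂ) - μ‖ ≤
          (l / c) * ‖(CFC.sqrt H)⁻¹ * (A - Astar) * (CFC.sqrt H)⁻¹‖ := by
  intro μ hμ
  by_contra hcon
  push_neg at hcon
  -- trivial case N = 0
  rcases Nat.eq_zero_or_pos N with hN | hN
  · subst hN
    rw [spectrum.mem_iff] at hμ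
    exact hμ (isUnit_of_subsingleton _)
  haveI : Nonempty (Fin N) := Fin.pos_iff_nonempty.mp hN
  -- notation
  set T : Matrix (Fin N) (Fin N) ℝ := CFC.sqrt H with hTdef
  set S : Matrix (Fin N) (Fin N) ℝ := CFC.sqrt A with hSdef
  set B : Matrix (Fin N) (Fin N) ℝ := T⁻¹ * (A - Astar) * T⁻¹ with hBdef
  have hSS : S * S = A := CFC.sqrt_mul_sqrt_self A hA.posSemidef.nonneg
  have hTT : T * T = H := CFC.sqrt_mul_sqrt_self H hH.posSemidef.nonneg
  have hSh : S.IsHermitian := (CFC.sqrt_nonneg A).posSemidef.1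
  have hTh : T.IsHermitian := (CFC.sqrt_nonneg H).posSemidef.1
  have hSt : Sᵀ = S := by
    ext i j
    have := congrFun (congrFun hSh i) j
    simpa [Matrix.conjTranspose_apply] using this
  have hTt : Tᵀ = T := by
    ext i j
    have := congrFun (congrFun hTh i) j
    simpa [Matrix.conjTranspose_apply] using this
  have hSdet : IsUnit S.det := by
    have hmul : S.det * S.det = A.det := by rw [← det_mul, hSS]
    have hd := hA.det_pos
    refine isUnit_iff_ne_zero.mpr fun h0 => ?_
    rw [h0, mul_zero] at hmul
    exact (ne_of_gt hd) hmul.symm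
  have hTdet : IsUnit T.det := by
    have hmul : T.det * T.det = H.det := by rw [← det_mul, hTT]
    have hd := hH.det_pos
    refine isUnit_iff_ne_zero.mpr fun h0 => ?_
    rw [h0, mul_zero] at hmul
    exact (ne_of_gt hd) hmul.symm
  clear_value T S
  -- a dot-product identity
  have quad : ∀ (M : Matrix (Fin N) (Fin N) ℝ), Mᵀ = M → ∀ (w : Fin N → ℝ),
      (M *ᵥ w) ⬝ᵥ (M *ᵥ w) = w ⬝ᵥ ((M * M) *ᵥ w) := by
    intro M hM w
    rw [Matrix.dotProduct_mulVec, ← Matrix.mulVec_transpose, hM, Matrix.mulVec_mulVec,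
      dotProduct_comm]
  have dot_sq : ∀ (y : Fin N → ℝ), ∑ i, (y i)^2 = y ⬝ᵥ y := by
    intro y
    exact Finset.sum_congr rfl fun i _ => sq (y i)
  -- coercivity quantitative bound
  have hX : ‖T * S⁻¹‖ ≤ Real.sqrt c⁻¹ := by
    apply l2_opNorm_le_of (Real.sqrt_nonneg _)
    intro x
    set v : Fin N → ℝ := S⁻¹ *ᵥ x with hvdef
    have hv : S *ᵥ v = x := by
      rw [hvdef, Matrix.mulVec_mulVec, Matrix.mul_nonsing_inv _ hSdet, Matrix.one_mulVec]
    refine le_of_pow_le_pow_left₀ two_ne_zero (by positivity) ?_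
    rw [mul_pow, sq_norm_euclidean, sq_norm_euclidean, Real.sq_sqrt (by positivity)]
    have e1 : ∀ (y : Fin N → ℝ), ∑ i, ‖y i‖^2 = y ⬝ᵥ y := by
      intro y
      rw [← dot_sq]
      exact Finset.sum_congr rfl fun i _ => by rw [Real.norm_eq_abs, sq_abs]
    rw [e1, e1]
    have h1 : (T * S⁻¹) *ᵥ x = T *ᵥ v := by rw [← Matrix.mulVec_mulVec]
    rw [h1, quad T hTt v, hTT]
    have h2 : v ⬝ᵥ (A *ᵥ v) = x ⬝ᵥ x := by
      rw [← hSS, ← quad S hSt v, hv]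
    have h3 := coer v
    rw [h2] at h3
    calc v ⬝ᵥ (H *ᵥ v) = c⁻¹ * (c * (v ⬝ᵥ (H *ᵥ v))) := by field_simp
      _ ≤ c⁻¹ * (x ⬝ᵥ x) := mul_le_mul_of_nonneg_left h3 (by positivity)
  -- the real perturbation matrix
  set E : Matrix (Fin N) (Fin N) ℝ := S⁻¹ * (A - Astar) * S⁻¹ with hEdef
  have hEnorm : ‖E‖ ≤ c⁻¹ * ‖B‖ := by
    have hXconj : (T * S⁻¹)ᴴ = S⁻¹ * T := by
      rw [Matrix.conjTranspose_mul, Matrix.conjTranspose_nonsing_inv, hSh, hTh]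
    have hE2 : E = (T * S⁻¹)ᴴ * B * (T * S⁻¹) := by
      rw [hXconj, hBdef, hEdef]
      simp only [Matrix.mul_assoc]
      rw [Matrix.mul_nonsing_inv_cancel_left _ _ hTdet, Matrix.nonsing_inv_mul_cancel_left _ _ hTdet]
    calc ‖E‖ = ‖(T * S⁻¹)ᴴ * B * (T * S⁻¹)‖ := by rw [← hE2]
      _ ≤ ‖(T * S⁻¹)ᴴ * B‖ * ‖T * S⁻¹‖ := Matrix.l2_opNorm_mul _ _
      _ ≤ (‖(T * S⁻¹)ᴴ‖ * ‖B‖) * ‖T * S⁻¹‖ :=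
          mul_le_mul_of_nonneg_right (Matrix.l2_opNorm_mul _ _) (norm_nonneg _)
      _ = (‖T * S⁻¹‖ * ‖B‖) * ‖T * S⁻¹‖ := by rw [Matrix.l2_opNorm_conjTranspose]
      _ ≤ (Real.sqrt c⁻¹ * ‖B‖) * Real.sqrt c⁻¹ := by
          have hn : (0:ℝ) ≤ ‖T * S⁻¹‖ := norm_nonneg _
          have hb : (0:ℝ) ≤ ‖B‖ := norm_nonneg _
          have hs : (0:ℝ) ≤ Real.sqrt c⁻¹ := Real.sqrt_nonneg _
          have k1 : ‖T * S⁻¹‖ * ‖B‖ ≤ Real.sqrt c⁻¹ * ‖B‖ := mul_le_mul_of_nonneg_right hX hb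
          exact mul_le_mul k1 hX hn (by positivity)
      _ = c⁻¹ * ‖B‖ := by
          rw [mul_comm (Real.sqrt c⁻¹) ‖B‖, mul_assoc, Real.mul_self_sqrt (by positivity)]
          ring
  -- real spectral data
  have hAh : A.IsHermitian := hA.1
  set U : Matrix (Fin N) (Fin N) ℝ := (hAh.eigenvectorUnitary : Matrix (Fin N) (Fin N) ℝ) with hUdef
  set lam : Fin N → ℝ := hAh.eigenvalues with hlamdef
  have hlampos : ∀ i, 0 < lam i := fun i => hA.eigenvalues_pos i
  have hlamne : ∀ i, lam i ≠ 0 := fun i => (hlampos i).ne'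
  have hspec : A = U * diagonal lam * star U := by
    have := hAh.spectral_theorem
    rwa [RCLike.ofReal_real_eq_id, Function.id_comp] at this
  have hUU : star U * U = 1 := Matrix.mem_unitaryGroup_iff'.mp hAh.eigenvectorUnitary.2
  have hUU' : U * star U = 1 := Matrix.mem_unitaryGroup_iff.mp hAh.eigenvectorUnitary.2
  have hAinv : A⁻¹ = U * diagonal (fun i => (lam i)⁻¹) * star U := by
    refine Matrix.inv_eq_left_inv ?_
    rw [hspec]
    calc (U * diagonal (fun i => (lam i)⁻¹) * star U) * (U * diagonal lam * star U)
        = U * (diagonal (fun i => (lam i)⁻¹) * ((star U * U) * (diagonal lam * star U))) := by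
          simp only [Matrix.mul_assoc]
      _ = U * ((diagonal (fun i => (lam i)⁻¹) * diagonal lam) * star U) := by
          rw [hUU, Matrix.one_mul, Matrix.mul_assoc]
      _ = 1 := by
          rw [Matrix.diagonal_mul_diagonal]
          have : (fun i => (lam i)⁻¹ * lam i) = fun _ => (1:ℝ) := by
            funext i; exact inv_mul_cancel₀ (hlamne i)
          rw [this, Matrix.diagonal_one, Matrix.one_mul]
          exact hUU'
  -- the contradiction hypothesis applied to eigenvalues
  have key : ∀ i, (lam i / c) * ‖B‖ < ‖(lam i : ℂ) - μ‖ := fun i =>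
    hcon (lam i) (hAh.eigenvalues_mem_spectrum_real i) (hlampos i)
  clear_value U lam
  -- complexification
  set φ : Matrix (Fin N) (Fin N) ℝ →+* Matrix (Fin N) (Fin N) ℂ :=
    (Complex.ofRealHom.mapMatrix) with hφdef
  have hφapp : ∀ M : Matrix (Fin N) (Fin N) ℝ, φ M = M.map (fun x : ℝ => (x:ℂ)) := fun _ => rfl
  have hφnorm : ∀ M : Matrix (Fin N) (Fin N) ℝ, ‖φ M‖ ≤ ‖M‖ := fun M => norm_map_complex_le M
  have hφstar : ∀ M : Matrix (Fin N) (Fin N) ℝ, star (φ M) = φ (star M) := by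
    intro M
    ext i j
    simp [Matrix.star_apply, hφapp, Matrix.map_apply, Complex.conj_ofReal]
  have hφinv : ∀ M : Matrix (Fin N) (Fin N) ℝ, IsUnit M.det → (φ M)⁻¹ = φ M⁻¹ := by
    intro M hM
    refine Matrix.inv_eq_left_inv ?_
    rw [← _root_.map_mul φ, Matrix.nonsing_inv_mul _ hM, _root_.map_one φ]
  -- unitary W
  set W : Matrix (Fin N) (Fin N) ℂ := φ U with hWdef
  have hWW : star W * W = 1 := by
    rw [hφstar, ← _root_.map_mul φ, hUU, _root_.map_one φ]
  have hWW' : W * star W = 1 := by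
    rw [hφstar, ← _root_.map_mul φ, hUU', _root_.map_one φ]
  have hWU : W ∈ Matrix.unitaryGroup (Fin N) ℂ := Matrix.mem_unitaryGroup_iff.mpr hWW'
  have hWunit : IsUnit W := ⟨⟨W, star W, hWW', hWW⟩, rfl⟩
  have hWn : ‖W‖ ≤ 1 := l2_opNorm_unitary_le W hWU
  have hWn' : ‖star W‖ ≤ 1 := l2_opNorm_unitary_le _ (Unitary.star_mem hWU)
  -- diagonal entries
  set d : Fin N → ℂ := fun i => 1 - μ * (lam i : ℂ)⁻¹ with hddef
  have hlamCne : ∀ i, (lam i : ℂ) ≠ 0 := by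
    intro i
    exact_mod_cast hlamne i
  have hdabs : ∀ i, ‖d i‖ = ‖(lam i : ℂ) - μ‖ / lam i := by
    intro i
    have hfactor : d i = ((lam i : ℂ) - μ) * ((lam i : ℂ))⁻¹ := by
      rw [sub_mul, mul_inv_cancel₀ (hlamCne i)]
    rw [hfactor, norm_mul, norm_inv, Complex.norm_real, Real.norm_of_nonneg (hlampos i).le, div_eq_mul_inv]
  set δ : ℝ := Finset.univ.inf' Finset.univ_nonempty (fun i => ‖d i‖) with hδdef
  have hδlt : c⁻¹ * ‖B‖ < δ := by
    rw [hδdef, Finset.lt_inf'_iff]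
    intro i _
    rw [hdabs i]
    rw [lt_div_iff₀ (hlampos i)]
    have := key i
    calc c⁻¹ * ‖B‖ * lam i = (lam i / c) * ‖B‖ := by field_simp
      _ < ‖(lam i : ℂ) - μ‖ := key i
  have hδpos : 0 < δ := lt_of_le_of_lt (by positivity) hδlt
  have hδle : ∀ i, δ ≤ ‖d i‖ := fun i => Finset.inf'_le _ (Finset.mem_univ i)
  have hdne : ∀ i, d i ≠ 0 := by
    intro i h0
    have h := hδle i
    rw [h0, norm_zero] at h
    linarith
  -- the perturbation in complex form
  set F : Matrix (Fin N) (Fin N) ℂ := star W * φ E * W with hFdef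
  have hFnorm : ‖F‖ < δ := by
    have h1 : ‖F‖ ≤ ‖star W * φ E‖ * ‖W‖ := Matrix.l2_opNorm_mul _ _
    have h2 : ‖star W * φ E‖ ≤ ‖star W‖ * ‖φ E‖ := Matrix.l2_opNorm_mul _ _
    have h3 : ‖φ E‖ ≤ c⁻¹ * ‖B‖ := le_trans (hφnorm E) hEnorm
    have hn1 : (0:ℝ) ≤ ‖φ E‖ := norm_nonneg _
    have hn3 : (0:ℝ) ≤ ‖W‖ := norm_nonneg _
    calc ‖F‖ ≤ ‖star W * φ E‖ * ‖W‖ := h1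
      _ ≤ (‖star W‖ * ‖φ E‖) * ‖W‖ := mul_le_mul_of_nonneg_right h2 hn3
      _ ≤ (1 * (c⁻¹ * ‖B‖)) * 1 := by
          refine mul_le_mul (mul_le_mul hWn' h3 hn1 zero_le_one) hWn hn3 ?_
          positivity
      _ = c⁻¹ * ‖B‖ := by ring
      _ < δ := hδlt
  haveI : CompleteSpace (Matrix (Fin N) (Fin N) ℂ) := FiniteDimensional.complete ℂ _
  have hsmall : IsUnit (1 - (diagonal fun i => (d i)⁻¹) * F) := by
    apply isUnit_one_sub_of_norm_lt_one
    calc ‖(diagonal fun i => (d i)⁻¹) * F‖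
        ≤ ‖(diagonal fun i => (d i)⁻¹ : Matrix (Fin N) (Fin N) ℂ)‖ * ‖F‖ := Matrix.l2_opNorm_mul _ _
      _ ≤ δ⁻¹ * ‖F‖ := by
          refine mul_le_mul_of_nonneg_right ?_ (norm_nonneg F)
          refine l2_opNorm_diagonal_le (by positivity) fun i => ?_
          rw [norm_inv]
          exact inv_anti₀ hδpos (hδle i)
      _ < δ⁻¹ * δ := (mul_lt_mul_iff_right₀ (by positivity)).mpr hFnorm
      _ = 1 := inv_mul_cancel₀ (ne_of_gt hδpos)
  have hdd : diagonal d * diagonal (fun i => (d i)⁻¹) = 1 := by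
    rw [Matrix.diagonal_mul_diagonal]
    have e : (fun i => d i * (d i)⁻¹) = fun _ => (1:ℂ) := funext fun i => mul_inv_cancel₀ (hdne i)
    rw [e, Matrix.diagonal_one]
  have hdd' : diagonal (fun i => (d i)⁻¹) * diagonal d = 1 := by
    rw [Matrix.diagonal_mul_diagonal]
    have e : (fun i => (d i)⁻¹ * d i) = fun _ => (1:ℂ) := funext fun i => inv_mul_cancel₀ (hdne i)
    rw [e, Matrix.diagonal_one]
  have hdiagunit : IsUnit (diagonal d) := ⟨⟨_, _, hdd, hdd'⟩, rfl⟩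
  have hNunit : IsUnit (diagonal d - F) := by
    have hfac : diagonal d - F = diagonal d * (1 - (diagonal fun i => (d i)⁻¹) * F) := by
      rw [Matrix.mul_sub, Matrix.mul_one, ← Matrix.mul_assoc, hdd, Matrix.one_mul]
    rw [hfac]
    exact hdiagunit.mul hsmall
  -- diagonal pieces
  set G : Matrix (Fin N) (Fin N) ℂ := diagonal (fun i => ((lam i : ℂ))⁻¹) with hGdef
  have hφAinv : φ A⁻¹ = W * G * star W := by
    rw [hAinv, _root_.map_mul φ, _root_.map_mul φ, ← hφstar]
    congr 2
    rw [hφapp, Matrix.diagonal_map (by simp), hGdef]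
    congr 1
    funext i
    simp
  have hdiagd : (diagonal d : Matrix (Fin N) (Fin N) ℂ) = 1 - μ • G := by
    ext i j
    by_cases hij : i = j
    · subst hij
      simp [hddef, hGdef, Matrix.sub_apply, Matrix.smul_apply, Matrix.one_apply_eq,
        Matrix.diagonal_apply_eq, smul_eq_mul]
    · simp [hGdef, Matrix.sub_apply, Matrix.smul_apply, Matrix.one_apply_ne hij,
        Matrix.diagonal_apply_ne _ hij, hij]
  -- assembling the factorization
  have hSc : (φ S)⁻¹ = φ S⁻¹ := hφinv S hSdet
  have hSAS : S⁻¹ * A * S⁻¹ = 1 := by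
    rw [← hSS, Matrix.nonsing_inv_mul_cancel_left _ _ hSdet]
    exact Matrix.mul_nonsing_inv _ hSdet
  have hSinvS : S⁻¹ * S⁻¹ = A⁻¹ := by
    refine (Matrix.inv_eq_left_inv ?_).symm
    rw [← hSS, Matrix.mul_assoc, Matrix.nonsing_inv_mul_cancel_left _ _ hSdet]
    exact Matrix.nonsing_inv_mul _ hSdet
  have hMeq : (φ S)⁻¹ * (φ A - μ • 1 - φ (A - Astar)) * (φ S)⁻¹
      = W * (diagonal d - F) * star W := by
    have lhs1 : (φ S)⁻¹ * (φ A - μ • 1 - φ (A - Astar)) * (φ S)⁻¹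
        = 1 - μ • φ A⁻¹ - φ E := by
      rw [hSc, Matrix.mul_sub, Matrix.mul_sub, Matrix.sub_mul, Matrix.sub_mul]
      congr 1
      · congr 1
        · rw [← _root_.map_mul φ, ← _root_.map_mul φ, hSAS, _root_.map_one φ]
        · rw [mul_smul_comm, Matrix.mul_one, smul_mul_assoc, ← _root_.map_mul φ, hSinvS]
      · rw [← _root_.map_mul φ, ← _root_.map_mul φ, hEdef]
    have rhs1 : W * (diagonal d - F) * star W = 1 - μ • φ A⁻¹ - φ E := by
      rw [hdiagd, Matrix.mul_sub, Matrix.mul_sub, Matrix.sub_mul, Matrix.sub_mul]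
      congr 1
      · congr 1
        · rw [Matrix.mul_one]
          exact hWW'
        · rw [mul_smul_comm, smul_mul_assoc, hφAinv]
      · rw [hFdef]
        have : W * (star W * φ E * W) * star W = (W * star W) * (φ E * (W * star W)) := by
          simp only [Matrix.mul_assoc]
        rw [this, hWW', Matrix.one_mul, Matrix.mul_one]
    rw [lhs1, rhs1]
  have hScdet : IsUnit (φ S).det := by
    have h0 : S.det ≠ 0 := fun h => by simp [h] at hSdet
    rw [isUnit_iff_ne_zero]
    have hd : (φ S).det = ((S.det : ℝ) : ℂ) := by
      rw [hφdef, RingHom.mapMatrix_apply]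
      exact (RingHom.map_det Complex.ofRealHom S).symm
    rw [hd]
    exact_mod_cast h0
  have hSunit : IsUnit (φ S) := (Matrix.isUnit_iff_isUnit_det _).mpr hScdet
  have hMunit : IsUnit (φ A - μ • 1 - φ (A - Astar)) := by
    have hfac : φ A - μ • 1 - φ (A - Astar)
        = φ S * ((φ S)⁻¹ * (φ A - μ • 1 - φ (A - Astar)) * (φ S)⁻¹) * φ S := by
      calc φ A - μ • 1 - φ (A - Astar)
          = (φ S * (φ S)⁻¹) * (φ A - μ • 1 - φ (A - Astar)) * ((φ S)⁻¹ * φ S) := by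
            rw [Matrix.mul_nonsing_inv _ hScdet, Matrix.nonsing_inv_mul _ hScdet,
              Matrix.one_mul, Matrix.mul_one]
        _ = φ S * ((φ S)⁻¹ * (φ A - μ • 1 - φ (A - Astar)) * (φ S)⁻¹) * φ S := by
            simp only [Matrix.mul_assoc]
    rw [hfac, hMeq]
    exact (hSunit.mul ((hWunit.mul hNunit).mul hWunit.star)).mul hSunit
  -- final contradiction
  rw [spectrum.mem_iff] at hμ
  apply hμ
  have hAst : Astar.map (fun x : ℝ => (x : ℂ)) = φ Astar := (hφapp Astar).symm
  have hfin : (algebraMap ℂ (Matrix (Fin N) (Fin N) ℂ)) μ - Astar.map (fun x : ℝ => (x : ℂ))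
      = -(φ A - μ • 1 - φ (A - Astar)) := by
    rw [hAst, Algebra.algebraMap_eq_smul_one, _root_.map_sub φ]
    abel
  rw [hfin]
  exact hMunit.neg
end

section
/- Let P and H be real symmetric positive definite N × N matrices and let c > 0 be such that vᵀ P v ≥ c · vᵀ H v for every v ∈ ℝ^N. Then for every real N × N matrix E, ‖P^{-1/2} E P^{-1/2}‖ ≤ (1 / c) · ‖H^{-1/2} E H^{-1/2}‖. -/
open scoped Matrix.Norms.L2Operator
open Matrix
section
open scoped ComplexOrder
noncomputable def Matrix.PosSemidef.sqrt {n 𝕜 : Type*} [Fintype n] [RCLike 𝕜] [DecidableEq n]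
    {A : Matrix n n 𝕜} (hA : A.PosSemidef) : Matrix n n 𝕜 :=
  hA.1.eigenvectorUnitary.1 * diagonal ((↑) ∘ (√·) ∘ hA.1.eigenvalues) *
    (star hA.1.eigenvectorUnitary : Matrix n n 𝕜)
end
section
open scoped ComplexOrder
private lemma Matrix.PosSemidef.sqrt_mul_self' {n 𝕜 : Type*} [Fintype n] [RCLike 𝕜] [DecidableEq n]
    {A : Matrix n n 𝕜} (hA : A.PosSemidef) : hA.sqrt * hA.sqrt = A := by
  conv_rhs => rw [hA.1.spectral_theorem, Unitary.conjStarAlgAut_apply]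
  unfold Matrix.PosSemidef.sqrt
  have hU := Unitary.coe_star_mul_self hA.1.eigenvectorUnitary
  rw [show ∀ a b c d e f : Matrix n n 𝕜, a * b * c * (d * e * f) = a * b * (c * d) * e * f by
    intros; simp only [Matrix.mul_assoc], hU, Matrix.mul_one]
  congr 1
  rw [Matrix.mul_assoc, diagonal_mul_diagonal]
  congr 2
  funext i
  simp only [Function.comp_apply]
  rw [← RCLike.ofReal_mul, Real.mul_self_sqrt (hA.eigenvalues_nonneg i)]

private lemma Matrix.PosSemidef.sqrt_isHermitian' {n 𝕜 : Type*} [Fintype n] [RCLike 𝕜] [DecidableEq n]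
    {A : Matrix n n 𝕜} (hA : A.PosSemidef) : (hA.sqrt)ᴴ = hA.sqrt := by
  unfold Matrix.PosSemidef.sqrt
  rw [conjTranspose_mul, conjTranspose_mul, diagonal_conjTranspose, Matrix.mul_assoc]
  have hd : (star fun x => ((√(hA.1.eigenvalues x) : ℝ) : 𝕜)) = fun x => ((√(hA.1.eigenvalues x) : ℝ) : 𝕜) := by
    funext x; simp
  simp only [Function.comp_def, hd, ← star_eq_conjTranspose, star_star, ]
end

private lemma euclid_norm_sq {n : ℕ} (y : Fin n → ℝ) :
    ‖(EuclideanSpace.equiv (Fin n) ℝ).symm y‖ ^ 2 = y ⬝ᵥ y := by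
  rw [EuclideanSpace.norm_eq, Real.sq_sqrt (by positivity)]
  simp [dotProduct, Real.norm_eq_abs, sq_abs, sq]

private lemma l2_opNorm_le_of_bound {n : ℕ} (A : Matrix (Fin n) (Fin n) ℝ) (M : ℝ)
    (hM : 0 ≤ M)
    (h : ∀ x : Fin n → ℝ,
      ‖(EuclideanSpace.equiv (Fin n) ℝ).symm (A *ᵥ x)‖ ≤
        M * ‖(EuclideanSpace.equiv (Fin n) ℝ).symm x‖) :
    ‖A‖ ≤ M := by
  rw [Matrix.l2_opNorm_def]
  refine ContinuousLinearMap.opNorm_le_bound _ hM fun x => ?_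
  have hx : x = (EuclideanSpace.equiv (Fin n) ℝ).symm ((EuclideanSpace.equiv (Fin n) ℝ) x) := rfl
  rw [hx]
  have h' := h ((EuclideanSpace.equiv (Fin n) ℝ) x)
  simp [Matrix.toEuclideanLin_apply] at h' ⊢
  exact h'

/-- Comparison inequality from the proofs of Propositions 1 and 2: if `P` and `H` are
symmetric positive definite with `vᵀPv ≥ c·vᵀHv` for every `v`, then for any matrix `E`,
`‖P^{-1/2} E P^{-1/2}‖ ≤ (1/c)·‖H^{-1/2} E H^{-1/2}‖`. -/
theorem invSqrt_conj_norm_comparison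
    {N : ℕ} (P H : Matrix (Fin N) (Fin N) ℝ)
    (hP : P.PosDef) (hH : H.PosDef)
    (c : ℝ) (hc : 0 < c)
    (coer : ∀ v : Fin N → ℝ, c * (v ⬝ᵥ H.mulVec v) ≤ v ⬝ᵥ P.mulVec v)
    (E : Matrix (Fin N) (Fin N) ℝ) :
    ‖(hP.posSemidef.sqrt)⁻¹ * E * (hP.posSemidef.sqrt)⁻¹‖ ≤
      (1 / c) * ‖(hH.posSemidef.sqrt)⁻¹ * E * (hH.posSemidef.sqrt)⁻¹‖ := by
  set Ps := hP.posSemidef.sqrt with hPsdef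
  set Hs := hH.posSemidef.sqrt with hHsdef
  have hPs2 : Ps * Ps = P := hP.posSemidef.sqrt_mul_self'
  have hHs2 : Hs * Hs = H := hH.posSemidef.sqrt_mul_self'
  have hPsH : Psᴴ = Ps := hP.posSemidef.sqrt_isHermitian'
  have hHsH : Hsᴴ = Hs := hH.posSemidef.sqrt_isHermitian'
  have hPsT : Psᵀ = Ps := by simpa [Matrix.conjTranspose_eq_transpose_of_trivial] using hPsH
  have hHsT : Hsᵀ = Hs := by simpa [Matrix.conjTranspose_eq_transpose_of_trivial] using hHsH
  have hdetPs : IsUnit Ps.det := by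
    rw [isUnit_iff_ne_zero]
    intro h
    have : P.det = Ps.det * Ps.det := by rw [← Matrix.det_mul, hPs2]
    rw [h, mul_zero] at this
    exact hP.det_pos.ne' this
  have hdetHs : IsUnit Hs.det := by
    rw [isUnit_iff_ne_zero]
    intro h
    have : H.det = Hs.det * Hs.det := by rw [← Matrix.det_mul, hHs2]
    rw [h, mul_zero] at this
    exact hH.det_pos.ne' this
  have hPsinv : Ps * Ps⁻¹ = 1 := Matrix.mul_nonsing_inv _ hdetPs
  have hPsinv' : Ps⁻¹ * Ps = 1 := Matrix.nonsing_inv_mul _ hdetPs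
  have hHsinv : Hs * Hs⁻¹ = 1 := Matrix.mul_nonsing_inv _ hdetHs
  have hHsinv' : Hs⁻¹ * Hs = 1 := Matrix.nonsing_inv_mul _ hdetHs
  have hPsinvT : (Ps⁻¹)ᵀ = Ps⁻¹ := by rw [Matrix.transpose_nonsing_inv, hPsT]
  set T := Ps⁻¹ * Hs with hT
  set B := Hs⁻¹ * E * Hs⁻¹ with hB
  have hTH : Tᴴ = Hs * Ps⁻¹ := by
    rw [hT, Matrix.conjTranspose_mul, hHsH, Matrix.conjTranspose_nonsing_inv, hPsH]
  -- key bound : ‖Tᴴ‖ ≤ √(1/c)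
  have hTnorm : ‖Tᴴ‖ ≤ Real.sqrt (1 / c) := by
    rw [hTH]
    refine l2_opNorm_le_of_bound _ _ (Real.sqrt_nonneg _) fun x => ?_
    have hnn1 : (0:ℝ) ≤ ‖(EuclideanSpace.equiv (Fin N) ℝ).symm ((Hs * Ps⁻¹) *ᵥ x)‖ :=
      norm_nonneg _
    have hnn2 : (0:ℝ) ≤ Real.sqrt (1 / c) * ‖(EuclideanSpace.equiv (Fin N) ℝ).symm x‖ :=
      mul_nonneg (Real.sqrt_nonneg _) (norm_nonneg _)
    rw [← Real.sqrt_sq hnn1, ← Real.sqrt_sq hnn2]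
    apply Real.sqrt_le_sqrt
    rw [mul_pow, Real.sq_sqrt (by positivity : (0:ℝ) ≤ 1 / c), euclid_norm_sq, euclid_norm_sq]
    set u := Ps⁻¹ *ᵥ x with hu
    have hux : Ps *ᵥ u = x := by
      rw [hu, Matrix.mulVec_mulVec, hPsinv, Matrix.one_mulVec]
    have hls : ((Hs * Ps⁻¹) *ᵥ x) = Hs *ᵥ u := by
      rw [hu, Matrix.mulVec_mulVec]
    rw [hls]
    have hdotH : (Hs *ᵥ u) ⬝ᵥ (Hs *ᵥ u) = u ⬝ᵥ H *ᵥ u := by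
      rw [← hHs2, ← Matrix.mulVec_mulVec, Matrix.dotProduct_mulVec u,
        ← Matrix.mulVec_transpose, hHsT]
    have hdotP : x ⬝ᵥ x = u ⬝ᵥ P *ᵥ u := by
      rw [← hux, ← hPs2, ← Matrix.mulVec_mulVec, Matrix.dotProduct_mulVec u,
        ← Matrix.mulVec_transpose, hPsT]
    rw [hdotH, hdotP]
    have := coer u
    calc u ⬝ᵥ H *ᵥ u = (1 / c) * (c * (u ⬝ᵥ H *ᵥ u)) := by field_simp
      _ ≤ (1 / c) * (u ⬝ᵥ P *ᵥ u) := by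
          apply mul_le_mul_of_nonneg_left this (by positivity)
  have hTnorm' : ‖T‖ ≤ Real.sqrt (1 / c) := by
    rw [← Matrix.l2_opNorm_conjTranspose T]; exact hTnorm
  -- the algebraic identity
  have hiden : Ps⁻¹ * E * Ps⁻¹ = T * B * Tᴴ := by
    rw [hTH, hT, hB]
    simp only [Matrix.mul_assoc]
    rw [Matrix.mul_nonsing_inv_cancel_left _ _ hdetHs,
      Matrix.nonsing_inv_mul_cancel_left _ _ hdetHs]
  rw [hiden]
  calc ‖T * B * Tᴴ‖ ≤ ‖T * B‖ * ‖Tᴴ‖ := Matrix.l2_opNorm_mul _ _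
    _ ≤ (‖T‖ * ‖B‖) * ‖Tᴴ‖ := by
        exact mul_le_mul_of_nonneg_right (Matrix.l2_opNorm_mul _ _) (norm_nonneg _)
    _ ≤ (Real.sqrt (1 / c) * ‖B‖) * Real.sqrt (1 / c) := by
        apply mul_le_mul _ hTnorm (norm_nonneg _)
          (mul_nonneg (Real.sqrt_nonneg _) (norm_nonneg _))
        exact mul_le_mul_of_nonneg_right hTnorm' (norm_nonneg _)
    _ = (Real.sqrt (1 / c) * Real.sqrt (1 / c)) * ‖B‖ := by ring
    _ = (1 / c) * ‖B‖ := by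
        rw [Real.mul_self_sqrt (by positivity)]
end
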